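/- Let K be a complete discretely valued field (of characteristic 0 or p) with perfect residue field of characteristic p, and let L/K be a finite, totally ramified, Galois p-extension of degree p^n. Let π_L be a uniformizer of L with minimal polynomial p(x) over K. Then v_L(p'(π_L)) + 1 ≡ p^n·u_m − b_m (mod p^n), where b_m and u_m denote the largest ramification break numbers of L/K in the lower and upper numbering respectively. -/

import Mathlib

/-- A normalized discrete valuation on a field `F` : an integer-valued function
(its value at `0` is irrelevant), additive on products of nonzero elements,
satisfying the ultrametric inequality, and attaining the value `1`
(so `v (Fˣ) = ℤ`, i.e. it is normalized). -/
structure NormDiscVal (F : Type*) [Field F] where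
  v : F → ℤ
  v_mul : ∀ x y : F, x ≠ 0 → y ≠ 0 → v (x * y) = v x + v y
  v_add : ∀ x y : F, x ≠ 0 → y ≠ 0 → x + y ≠ 0 → min (v x) (v y) ≤ v (x + y)
  exists_uniformizer : ∃ π : F, π ≠ 0 ∧ v π = 1

namespace NormDiscVal

variable {F : Type*} [Field F]

/-- `x` belongs to the fractional ideal `𝔓^j = {x | v x ≥ j}` (and `0` belongs to all). -/
def memP (w : NormDiscVal F) (j : ℤ) (x : F) : Prop := x = 0 ∨ j ≤ w.v x

/-- `F` is complete with respect to the valuation `w` :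
every Cauchy sequence (for the valuation) has a limit. -/
def IsComplete (w : NormDiscVal F) : Prop :=
  ∀ a : ℕ → F,
    (∀ N : ℤ, ∃ M : ℕ, ∀ m k : ℕ, M ≤ m → M ≤ k → w.memP N (a m - a k)) →
    ∃ l : F, ∀ N : ℤ, ∃ M : ℕ, ∀ m : ℕ, M ≤ m → w.memP N (a m - l)

/-- The residue field of `w` has characteristic `p` and is perfect :
`p` vanishes in the residue field and the Frobenius is surjective on it. -/
def PerfectResidueCharP (w : NormDiscVal F) (p : ℕ) : Prop :=
  w.memP 1 (p : F) ∧
    ∀ x : F, w.memP 0 x → ∃ y : F, w.memP 0 y ∧ w.memP 1 (x - y ^ p)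

end NormDiscVal

open Polynomial

namespace NormDiscVal

variable {F : Type*} [Field F] (w : NormDiscVal F)

lemma v_one : w.v 1 = 0 := by
  have := w.v_mul 1 1 one_ne_zero one_ne_zero
  rw [mul_one] at this; omega

lemma v_neg (x : F) (hx : x ≠ 0) : w.v (-x) = w.v x := by
  have hm1 : w.v (-1 : F) = 0 := by
    have := w.v_mul (-1 : F) (-1) (by norm_num) (by norm_num)
    rw [neg_mul_neg, one_mul, w.v_one] at this; omega
  have := w.v_mul (-1 : F) x (by norm_num) hx
  rw [neg_one_mul, hm1] at this; omega

lemma v_pow (x : F) (hx : x ≠ 0) (k : ℕ) : w.v (x ^ k) = k * w.v x := by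
  induction k with
  | zero => simpa using w.v_one
  | succ k ih =>
    rw [pow_succ, w.v_mul _ _ (pow_ne_zero _ hx) hx, ih]
    push_cast; ring

lemma memP_of_le {N : ℤ} {x : F} (h : N ≤ w.v x) : w.memP N x := Or.inr h

lemma memP_neg {N : ℤ} {x : F} (h : w.memP N x) : w.memP N (-x) := by
  rcases h with h | h
  · exact Or.inl (by simp [h])
  · rcases eq_or_ne x 0 with rfl | hx
    · exact Or.inl (by simp)
    · exact Or.inr (by rwa [w.v_neg x hx])

lemma memP_add {N : ℤ} {x y : F} (hx : w.memP N x) (hy : w.memP N y) :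
    w.memP N (x + y) := by
  rcases hx with rfl | hx
  · simpa using hy
  rcases hy with rfl | hy
  · simpa using w.memP_of_le hx
  rcases eq_or_ne (x + y) 0 with h0 | h0
  · exact Or.inl h0
  rcases eq_or_ne x 0 with rfl | hx0
  · simpa using w.memP_of_le hy
  rcases eq_or_ne y 0 with rfl | hy0
  · simpa using w.memP_of_le hx
  exact Or.inr <| le_trans (le_min hx hy) (w.v_add x y hx0 hy0 h0)

lemma memP_sum {ι : Type*} (s : Finset ι) (g : ι → F) {N : ℤ}
    (h : ∀ i ∈ s, w.memP N (g i)) : w.memP N (∑ i ∈ s, g i) := by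
  classical
  induction s using Finset.induction with
  | empty => exact Or.inl (by simp)
  | insert _ _ hnot ih =>
    rw [Finset.sum_insert hnot]
    exact w.memP_add (h _ (Finset.mem_insert_self _ _))
      (ih fun i hi => h i (Finset.mem_insert_of_mem hi))

/-- If one term has strictly smaller valuation than all others, the sum is nonzero. -/
lemma sum_ne_zero_of_strict_min {ι : Type*} {s : Finset ι} {g : ι → F} {i0 : ι}
    (hi0 : i0 ∈ s) (h0 : g i0 ≠ 0)
    (h : ∀ i ∈ s, i ≠ i0 → w.memP (w.v (g i0) + 1) (g i)) :
    ∑ i ∈ s, g i ≠ 0 := by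
  classical
  intro hsum
  rw [← Finset.add_sum_erase s g hi0] at hsum
  have hrest : w.memP (w.v (g i0) + 1) (∑ i ∈ s.erase i0, g i) :=
    w.memP_sum _ _ fun i hi =>
      h i (Finset.mem_of_mem_erase hi) (Finset.ne_of_mem_erase hi)
  have heq : g i0 = -(∑ i ∈ s.erase i0, g i) := by linear_combination hsum
  have h2 := w.memP_neg hrest
  rw [← heq] at h2
  rcases h2 with h' | h'
  · exact h0 h'
  · omega

/-- If all (nonzero) terms have pairwise distinct valuations and the family is
nonempty, the sum is nonzero. -/
lemma sum_ne_zero_of_distinct {ι : Type*} {s : Finset ι} {g : ι → F}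
    (hne : s.Nonempty) (h0 : ∀ i ∈ s, g i ≠ 0)
    (hdist : ∀ i ∈ s, ∀ j ∈ s, w.v (g i) = w.v (g j) → i = j) :
    ∑ i ∈ s, g i ≠ 0 := by
  classical
  obtain ⟨i0, hi0, hmin⟩ := s.exists_min_image (fun i => w.v (g i)) hne
  exact w.sum_ne_zero_of_strict_min hi0 (h0 _ hi0) fun i hi hne' =>
    w.memP_of_le (by
      have h1 := hmin i hi
      have h2 : w.v (g i0) ≠ w.v (g i) := fun h => hne' (hdist i hi i0 hi0 h.symm)
      omega)

lemma v_prod {ι : Type*} (s : Finset ι) (g : ι → F) (h : ∀ i ∈ s, g i ≠ 0) :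
    w.v (∏ i ∈ s, g i) = ∑ i ∈ s, w.v (g i) := by
  classical
  induction s using Finset.induction with
  | empty => simpa using w.v_one
  | insert _ _ hnot ih =>
    rename_i a s'
    rw [Finset.prod_insert hnot, Finset.sum_insert hnot,
      w.v_mul _ _ (h _ (Finset.mem_insert_self _ _))
        (Finset.prod_ne_zero_iff.mpr fun i hi => h i (Finset.mem_insert_of_mem hi)),
      ih fun i hi => h i (Finset.mem_insert_of_mem hi)]

end NormDiscVal

/-- The `i`-th ramification group (lower numbering) of the totally ramified
Galois extension `L/K`, computed with respect to the uniformizer `πL`: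
`G_i = {σ | v_L(σ πL − πL) ≥ i + 1}`. -/
def ramGrp (K : Type*) {L : Type*} [Field K] [Field L] [Algebra K L]
    (vL : NormDiscVal L) (πL : L) (i : ℤ) : Set (L ≃ₐ[K] L) :=
  {σ | σ πL = πL ∨ i + 1 ≤ vL.v (σ πL - πL)}

/-- `i` is a ramification break number (lower numbering): `G_{i+1} ⊊ G_i`. -/
def IsRamBreak (K : Type*) {L : Type*} [Field K] [Field L] [Algebra K L]
    (vL : NormDiscVal L) (πL : L) (i : ℤ) : Prop :=
  ramGrp K vL πL (i + 1) ⊂ ramGrp K vL πL i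

/-- The Herbrand function `φ_{L/K}` evaluated at an integer `b ≥ 0`:
`φ(b) = (1/|G₀|) · ∑_{i=1}^{b} |G_i|`. -/
noncomputable def herbrandPhi (K : Type*) {L : Type*} [Field K] [Field L] [Algebra K L]
    (vL : NormDiscVal L) (πL : L) (b : ℤ) : ℚ :=
  (∑ i ∈ Finset.Icc (1 : ℤ) b, (Nat.card ↥(ramGrp K vL πL i) : ℚ)) /
    (Nat.card ↥(ramGrp K vL πL 0) : ℚ)

/-- **The different and the largest ramification break.**  Let `K` be a
complete discretely valued field (characteristic `0` or `p`) with perfect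
residue field of characteristic `p`, and `L/K` a finite, totally ramified,
Galois `p`-extension of degree `p ^ n`.  With `bm` the largest lower
ramification break and `u_m = φ(bm)` the largest upper break, one has
`v_L(p'(πL)) + 1 ≡ p ^ n · u_m − bm (mod p ^ n)`
(the congruence is witnessed by an integer `t`). -/
theorem different_congruent_upper_lower_breaks
    {p : ℕ} (hp : p.Prime) {K L : Type*} [Field K] [Field L] [Algebra K L]
    (hchar : ringChar K = 0 ∨ ringChar K = p)
    (vK : NormDiscVal K) (hKcompl : vK.IsComplete)
    (hKres : vK.PerfectResidueCharP p)
    [FiniteDimensional K L] [IsGalois K L]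
    (n : ℕ) (hdeg : Module.finrank K L = p ^ n)
    (vL : NormDiscVal L)
    (htotram : ∀ x : K, x ≠ 0 → vL.v (algebraMap K L x) = (p ^ n : ℤ) * vK.v x)
    (πL : L) (hπL : πL ≠ 0 ∧ vL.v πL = 1)
    (d : ℤ) (hd : d = vL.v (aeval πL (derivative (minpoly K πL))))
    (bm : ℤ) (hbm : IsRamBreak K vL πL bm ∧ ∀ i : ℤ, IsRamBreak K vL πL i → i ≤ bm) :
    ∃ t : ℤ,
      ((d + 1 : ℤ) : ℚ) - (((p : ℚ) ^ n) * herbrandPhi K vL πL bm - (bm : ℚ)) =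
        ((p : ℚ) ^ n) * (t : ℚ) := by

  classical
  obtain ⟨hπ0, hπ1⟩ := hπL
  set Nz : ℤ := (p : ℤ) ^ n with hNzdef
  have hNzpos : 0 < Nz := pow_pos (by exact_mod_cast hp.pos) n
  have hNnat : ((p ^ n : ℕ) : ℤ) = Nz := by push_cast [hNzdef]; ring
  have hint : IsIntegral K πL := IsIntegral.of_finite K πL
  have hP : (minpoly K πL).Monic := minpoly.monic hint
  set P := minpoly K πL with hPdef
  set f := algebraMap K L with hfdef
  have hfinj : Function.Injective f := (algebraMap K L).injective
  have hfne : ∀ x : K, x ≠ 0 → f x ≠ 0 := fun x hx h =>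
    hx (hfinj (by rwa [map_zero]))
  have hterm : ∀ r : L, r ≠ 0 → ∀ i : ℕ, P.coeff i ≠ 0 →
      vL.v (f (P.coeff i) * r ^ i) = Nz * vK.v (P.coeff i) + i * vL.v r := by
    intro r hr i hi
    rw [vL.v_mul _ _ (hfne _ hi) (pow_ne_zero _ hr), htotram _ hi, vL.v_pow _ hr]
  have htermne : ∀ r : L, r ≠ 0 → ∀ i : ℕ, P.coeff i ≠ 0 →
      f (P.coeff i) * r ^ i ≠ 0 := fun r hr i hi =>
    mul_ne_zero (hfne _ hi) (pow_ne_zero _ hr)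
  have hrel : ∀ r : L, (aeval r) P = 0 →
      ∑ i ∈ Finset.range (P.natDegree + 1), f (P.coeff i) * r ^ i = 0 := by
    intro r hr
    rw [← hr, Polynomial.aeval_eq_sum_range]
    exact Finset.sum_congr rfl fun i _ => (Algebra.smul_def _ _).symm
  have haevalP : (aeval πL) P = 0 := minpoly.aeval K πL
  have hfilter : ∀ r : L, (aeval r) P = 0 →
      ∑ i ∈ (Finset.range (P.natDegree + 1)).filter (fun i => P.coeff i ≠ 0),
        f (P.coeff i) * r ^ i = 0 := by
    intro r hr
    rw [← hrel r hr]
    exact Finset.sum_filter_of_ne fun i _ h hc => h (by rw [hc, map_zero, zero_mul])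
  have hdegmem : P.natDegree ∈
      (Finset.range (P.natDegree + 1)).filter (fun i => P.coeff i ≠ 0) :=
    Finset.mem_filter.mpr ⟨Finset.mem_range.mpr (Nat.lt_succ_self _),
      by rw [hP.coeff_natDegree]; exact one_ne_zero⟩
  -- Step A : the degree of the minimal polynomial is p ^ n
  have hdegP : (P.natDegree : ℤ) = Nz := by
    have hle : P.natDegree ≤ p ^ n := hdeg ▸ minpoly.natDegree_le πL
    rcases lt_or_eq_of_le hle with hlt | heq
    · exfalso
      refine vL.sum_ne_zero_of_distinct ⟨_, hdegmem⟩
        (fun i hi => htermne πL hπ0 i (Finset.mem_filter.mp hi).2) ?_ (hfilter πL haevalP)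
      intro i hi j hj hv
      have hi' := Finset.mem_filter.mp hi
      have hj' := Finset.mem_filter.mp hj
      rw [hterm πL hπ0 i hi'.2, hterm πL hπ0 j hj'.2, hπ1] at hv
      have hdvd : Nz ∣ ((i : ℤ) - j) := ⟨vK.v (P.coeff j) - vK.v (P.coeff i), by linarith⟩
      have hiN : i < p ^ n := by have := Finset.mem_range.mp hi'.1; omega
      have hjN : j < p ^ n := by have := Finset.mem_range.mp hj'.1; omega
      have := Int.eq_zero_of_dvd_of_natAbs_lt_natAbs hdvd (by omega)
      omega
    · omega
  -- Step B : P is an Eisenstein polynomial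
  have hEis : ∀ i : ℕ, (i : ℤ) < Nz → P.coeff i ≠ 0 → 1 ≤ vK.v (P.coeff i) := by
    intro i0 hi0N hc0
    by_contra hv0
    push_neg at hv0
    have hv0' : vK.v (P.coeff i0) ≤ 0 := by omega
    set s := (Finset.range (P.natDegree + 1)).filter (fun i => P.coeff i ≠ 0) with hs
    have hi0mem : i0 ∈ s := Finset.mem_filter.mpr
      ⟨Finset.mem_range.mpr (by omega), hc0⟩
    obtain ⟨j0, hj0, hmin⟩ := s.exists_min_image
      (fun i => vL.v (f (P.coeff i) * πL ^ i)) ⟨_, hi0mem⟩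
    have hvj0 : vL.v (f (P.coeff j0) * πL ^ j0) < Nz := by
      have h1 := hmin i0 hi0mem
      have h2 := hterm πL hπ0 i0 hc0
      rw [hπ1] at h2
      simp only [mul_one] at h2
      nlinarith [hNzpos]
    have hNcoeff : P.coeff (p ^ n) ≠ 0 ∧
        vL.v (f (P.coeff (p ^ n)) * πL ^ (p ^ n)) = Nz := by
      have hco : P.coeff (p ^ n) = 1 := by
        have hnd : P.natDegree = p ^ n := by omega
        rw [← hnd, hP.coeff_natDegree]
      refine ⟨by rw [hco]; exact one_ne_zero, ?_⟩
      rw [hterm πL hπ0 _ (by rw [hco]; exact one_ne_zero), hco, vK.v_one, hπ1]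
      omega
    refine absurd (hfilter πL haevalP) (vL.sum_ne_zero_of_strict_min hj0
      (htermne πL hπ0 j0 (Finset.mem_filter.mp hj0).2) ?_)
    intro i hi hij
    refine vL.memP_of_le ?_
    have hi' := Finset.mem_filter.mp hi
    have hj0' := Finset.mem_filter.mp hj0
    have hge := hmin i hi
    rcases eq_or_lt_of_le hge with hv | hv
    · exfalso
      have hvi := hterm πL hπ0 i hi'.2
      have hvj := hterm πL hπ0 j0 hj0'.2
      rw [hπ1] at hvi hvj
      simp only [mul_one] at hvi hvj
      have hdvd : Nz ∣ ((i : ℤ) - j0) := ⟨vK.v (P.coeff j0) - vK.v (P.coeff i), by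
        rw [hvi, hvj] at hv; linarith⟩
      have hiN : (i : ℤ) ≤ Nz := by
        have := Finset.mem_range.mp hi'.1; omega
      have hjN : (j0 : ℤ) ≤ Nz := by
        have := Finset.mem_range.mp hj0'.1; omega
      have hne0 : ((i : ℤ) - j0) ≠ 0 := fun h => hij (by omega)
      have habs : ((i : ℤ) - j0).natAbs = Nz.natAbs :=
        le_antisymm (by omega)
          (Nat.le_of_dvd (by omega) (Int.natAbs_dvd_natAbs.mpr hdvd))
      have hcases : (i = p ^ n ∧ j0 = 0) ∨ (i = 0 ∧ j0 = p ^ n) := by omega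
      rcases hcases with ⟨rfl, rfl⟩ | ⟨rfl, rfl⟩
      · rw [hNcoeff.2] at hvi
        omega
      · rw [hNcoeff.2] at hvj
        omega
    · omega
  -- Step C : every conjugate of πL has valuation at least 1
  have hσne : ∀ σ : L ≃ₐ[K] L, σ πL ≠ 0 := by
    intro σ h
    exact hπ0 (σ.injective (by rw [h, map_zero]))
  have haevalσ : ∀ σ : L ≃ₐ[K] L, (aeval (σ πL)) P = 0 := by
    intro σ
    have h1 := Polynomial.aeval_algHom_apply (σ : L →ₐ[K] L) πL P
    rw [haevalP, map_zero] at h1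
    simpa using h1
  have hvroot : ∀ σ : L ≃ₐ[K] L, 1 ≤ vL.v (σ πL) := by
    intro σ
    by_contra ht
    push_neg at ht
    have ht' : vL.v (σ πL) ≤ 0 := by omega
    set r := σ πL with hrdef
    have hr0 : r ≠ 0 := hσne σ
    have h0 := hrel r (haevalσ σ)
    rw [Finset.sum_range_succ] at h0
    have hdegnat : P.natDegree = p ^ n := by omega
    have hlast : f (P.coeff P.natDegree) * r ^ P.natDegree = r ^ P.natDegree := by
      rw [hP.coeff_natDegree, map_one, one_mul]
    rw [hlast] at h0
    have hpow : r ^ P.natDegree = -∑ i ∈ Finset.range P.natDegree, f (P.coeff i) * r ^ i := by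
      linear_combination h0
    have hmem : vL.memP (Nz + Nz * vL.v r) (r ^ P.natDegree) := by
      rw [hpow]
      refine vL.memP_neg (vL.memP_sum _ _ fun i hi => ?_)
      rcases eq_or_ne (P.coeff i) 0 with hc | hc
      · exact Or.inl (by rw [hc, map_zero, zero_mul])
      · refine vL.memP_of_le ?_
        rw [hterm r hr0 i hc]
        have h1 : 1 ≤ vK.v (P.coeff i) := hEis i (by
          have := Finset.mem_range.mp hi; omega) hc
        have h2 : (i : ℤ) ≤ Nz := by
          have := Finset.mem_range.mp hi; omega
        have h3 : (0:ℤ) ≤ (i:ℤ) := Int.natCast_nonneg i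
        nlinarith [hNzpos]
    rcases hmem with h | h
    · exact pow_ne_zero _ hr0 h
    · rw [vL.v_pow _ hr0, hdegnat] at h
      have h4 : ((p ^ n : ℕ) : ℤ) = Nz := hNnat
      nlinarith [hNzpos]
  -- Step D : πL generates L over K, hence only the identity fixes it
  have hadj : IntermediateField.adjoin K {πL} = ⊤ := by
    refine IntermediateField.eq_of_le_of_finrank_le le_top ?_
    rw [IntermediateField.finrank_top', IntermediateField.adjoin.finrank hint, hdeg, ← hPdef]
    omega
  have hstab : ∀ σ : L ≃ₐ[K] L, σ πL = πL → σ = 1 := by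
    intro σ hσ
    have hAadj : Algebra.adjoin K {πL} = ⊤ := by
      have h1 := IntermediateField.adjoin_simple_toSubalgebra_of_isAlgebraic hint.isAlgebraic
      rw [hadj, IntermediateField.top_toSubalgebra] at h1
      exact h1.symm
    have hle : Algebra.adjoin K {πL} ≤ AlgHom.equalizer (σ : L →ₐ[K] L) (AlgHom.id K L) :=
      Algebra.adjoin_le (Set.singleton_subset_iff.mpr (by simpa using hσ))
    rw [hAadj, top_le_iff] at hle
    refine AlgEquiv.ext fun x => ?_
    have hx : x ∈ AlgHom.equalizer (σ : L →ₐ[K] L) (AlgHom.id K L) := by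
      rw [hle]; trivial
    simpa using hx
  have hstab' : ∀ σ : L ≃ₐ[K] L, σ ≠ 1 → σ πL - πL ≠ 0 := by
    intro σ hσ h
    exact hσ (hstab σ (by linear_combination h))
  have hinj : Function.Injective (fun σ : L ≃ₐ[K] L => σ πL) := by
    intro σ τ h
    simp only at h
    have h1 : (τ⁻¹ * σ) πL = πL := by
      rw [AlgEquiv.mul_apply, h, ← AlgEquiv.mul_apply, inv_mul_cancel, AlgEquiv.one_apply]
    have h2 := hstab _ h1
    rw [inv_mul_eq_one] at h2
    exact h2.symm
  -- Step E : the minimal polynomial splits as a product over the Galois group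
  have cardG : Fintype.card (L ≃ₐ[K] L) = p ^ n := by
    rw [Fintype.card_eq_nat_card, IsGalois.card_aut_eq_finrank, hdeg]
  set s : Multiset L := Finset.univ.val.map (fun σ : L ≃ₐ[K] L => σ πL) with hsdef
  have hnodup : s.Nodup := Finset.univ.nodup.map hinj
  have hscard : Multiset.card s = p ^ n := by
    rw [hsdef, Multiset.card_map]
    exact (Finset.card_univ).trans cardG
  have hPmap : P.map f ≠ 0 := (hP.map f).ne_zero
  have hroots : s ≤ (P.map f).roots := by
    rw [Multiset.le_iff_subset hnodup]
    intro x hx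
    obtain ⟨σ, -, rfl⟩ := Multiset.mem_map.mp hx
    rw [Polynomial.mem_roots hPmap]
    show Polynomial.eval (σ πL) (P.map f) = 0
    rw [Polynomial.eval_map, ← Polynomial.aeval_def]
    exact haevalσ σ
  have hdvd : (s.map fun a => X - C a).prod ∣ P.map f :=
    dvd_trans (Multiset.prod_dvd_prod_of_le (Multiset.map_le_map hroots))
      (Polynomial.prod_multiset_X_sub_C_dvd (P.map f))
  have hqmonic : ((s.map fun a => X - C a).prod).Monic :=
    Polynomial.monic_multiset_prod_of_monic _ _ fun a _ => Polynomial.monic_X_sub_C a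
  have hqdeg : ((s.map fun a => X - C a).prod).natDegree = p ^ n := by
    rw [Polynomial.natDegree_multiset_prod_X_sub_C_eq_card, hscard]
  have hPmapdeg : (P.map f).natDegree = p ^ n := by
    rw [hP.natDegree_map]; omega
  have hfact : P.map f = (s.map fun a => X - C a).prod := by
    obtain ⟨c, hc⟩ := hdvd
    have hq0 : ((s.map fun a => X - C a).prod) ≠ 0 := hqmonic.ne_zero
    have hc0 : c ≠ 0 := fun h => hPmap (by rw [hc, h, mul_zero])
    have hcdeg : c.natDegree = 0 := by
      have hnd := Polynomial.natDegree_mul hq0 hc0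
      rw [← hc, hPmapdeg, hqdeg] at hnd; omega
    have hlead : c.coeff 0 = 1 := by
      have h1 : (P.map f).leadingCoeff = 1 := (hP.map f)
      rw [hc, Polynomial.leadingCoeff_mul, hqmonic.leadingCoeff, one_mul] at h1
      rwa [Polynomial.leadingCoeff, hcdeg] at h1
    have hc1 : c = 1 := by
      rw [Polynomial.eq_C_of_natDegree_eq_zero hcdeg, hlead, map_one]
    rw [hc, hc1, mul_one]
  -- Step F : value of the derivative at πL
  have hπmem : πL ∈ s := Multiset.mem_map.mpr
    ⟨1, Finset.mem_val.mpr (Finset.mem_univ _), AlgEquiv.one_apply πL⟩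
  have hfacne : ∀ σ : L ≃ₐ[K] L, σ ∈ Finset.univ.erase (1 : L ≃ₐ[K] L) →
      πL - σ πL ≠ 0 := by
    intro σ hσ h
    exact hstab' σ (Finset.ne_of_mem_erase hσ) (by linear_combination -h)
  have hder : (aeval πL) (derivative P) =
      ∏ σ ∈ Finset.univ.erase (1 : L ≃ₐ[K] L), (πL - σ πL) := by
    have h1 : (aeval πL) (derivative P) = Polynomial.eval πL (derivative (P.map f)) := by
      rw [Polynomial.derivative_map, Polynomial.eval_map, Polynomial.aeval_def]
    rw [h1, hfact, Polynomial.eval_multiset_prod_X_sub_C_derivative hπmem]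
    have h3 : s.erase πL =
        (Finset.univ.erase (1 : L ≃ₐ[K] L)).val.map (fun σ : L ≃ₐ[K] L => σ πL) := by
      rw [Finset.erase_val, Multiset.map_erase _ hinj, ← hsdef]
      simp
    rw [h3, Multiset.map_map, Finset.prod_eq_multiset_prod]
    rfl
  have hdsum : d = ∑ σ ∈ Finset.univ.erase (1 : L ≃ₐ[K] L), vL.v (σ πL - πL) := by
    rw [hd, hder, vL.v_prod _ _ hfacne]
    refine Finset.sum_congr rfl fun σ hσ => ?_
    rw [show πL - σ πL = -(σ πL - πL) by ring,
      vL.v_neg _ (hstab' σ (Finset.ne_of_mem_erase hσ))]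
  -- Step G : bounds on the break function
  have hD1 : ∀ σ : L ≃ₐ[K] L, σ ≠ 1 → 1 ≤ vL.v (σ πL - πL) := by
    intro σ hσ
    have h1 : σ πL - πL = σ πL + (-πL) := by ring
    rw [h1]
    refine le_trans (le_min (hvroot σ) (by rw [vL.v_neg _ hπ0]; omega))
      (vL.v_add _ _ (hσne σ) (neg_ne_zero.mpr hπ0) ?_)
    rw [← h1]
    exact hstab' σ hσ
  have hmono : ∀ i j : ℤ, i ≤ j → ramGrp K vL πL j ⊆ ramGrp K vL πL i :=
    fun i j hij σ hσ => hσ.imp id fun h => le_trans (by omega) h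
  have hDle : ∀ σ : L ≃ₐ[K] L, σ ≠ 1 → vL.v (σ πL - πL) ≤ bm + 1 := by
    intro σ hσ
    set Dσ := vL.v (σ πL - πL) with hDσ
    have h1 : σ ∈ ramGrp K vL πL (Dσ - 1) := Or.inr (by omega)
    have h2 : σ ∉ ramGrp K vL πL (Dσ - 1 + 1) := by
      rintro (h | h)
      · exact hstab' σ hσ (by rw [h, sub_self])
      · omega
    have hbreak : IsRamBreak K vL πL (Dσ - 1) :=
      HasSubset.Subset.ssubset_of_ne (hmono _ _ (by omega)) fun heq => h2 (heq ▸ h1)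
    have := hbm.2 _ hbreak
    omega
  have hbm0 : 0 ≤ bm := by
    obtain ⟨σ0, hσ0mem, hσ0not⟩ := Set.exists_of_ssubset hbm.1
    have hσ0ne : σ0 πL ≠ πL := fun h => hσ0not (Or.inl h)
    have hσ1 : σ0 ≠ 1 := fun h => hσ0ne (by rw [h, AlgEquiv.one_apply])
    rcases hσ0mem with h | h
    · exact absurd h hσ0ne
    · have := hD1 σ0 hσ1
      have hnot : ¬ (bm + 1 + 1 ≤ vL.v (σ0 πL - πL)) := fun hh => hσ0not (Or.inr hh)
      omega
  -- Step H : cardinality of the ramification groups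
  have hcard : ∀ i : ℤ, (Nat.card ↥(ramGrp K vL πL i) : ℤ) =
      1 + ((Finset.univ.filter
        (fun σ : L ≃ₐ[K] L => σ ≠ 1 ∧ i + 1 ≤ vL.v (σ πL - πL))).card : ℤ) := by
    intro i
    have hset : ramGrp K vL πL i = ↑(insert (1 : L ≃ₐ[K] L)
        (Finset.univ.filter
          (fun σ : L ≃ₐ[K] L => σ ≠ 1 ∧ i + 1 ≤ vL.v (σ πL - πL)))) := by
      ext σ
      simp only [Finset.coe_insert, Set.mem_insert_iff, Finset.mem_coe, Finset.mem_filter,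
        Finset.mem_univ, true_and]
      constructor
      · rintro (h | h)
        · exact Or.inl (hstab σ h)
        · rcases eq_or_ne σ 1 with rfl | hσ
          · exact Or.inl rfl
          · exact Or.inr ⟨hσ, h⟩
      · rintro (rfl | ⟨hσ, h⟩)
        · exact Or.inl (AlgEquiv.one_apply πL)
        · exact Or.inr h
    rw [hset, Nat.card_coe_set_eq, Set.ncard_coe_finset,
      Finset.card_insert_of_notMem (by simp)]
    push_cast
    ring
  have hcard0 : (Nat.card ↥(ramGrp K vL πL 0) : ℚ) = (p : ℚ) ^ n := by
    have hset : ramGrp K vL πL 0 = Set.univ := by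
      ext σ
      simp only [Set.mem_univ, iff_true]
      rcases eq_or_ne σ 1 with rfl | hσ
      · exact Or.inl (AlgEquiv.one_apply πL)
      · exact Or.inr (by have := hD1 σ hσ; omega)
    rw [hset, Nat.card_coe_set_eq, Set.ncard_univ, Nat.card_eq_fintype_card, cardG]
    push_cast
    ring
  -- Step I : the sum over the ramification filtration
  have hone : (1 : L ≃ₐ[K] L) ∈ (Finset.univ : Finset (L ≃ₐ[K] L)) := Finset.mem_univ _
  have hsum : (∑ i ∈ Finset.Icc (1 : ℤ) bm, (Nat.card ↥(ramGrp K vL πL i) : ℤ)) =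
      bm + d - Nz + 1 := by
    have h1 : ∀ σ : L ≃ₐ[K] L, σ ≠ 1 →
        (∑ i ∈ Finset.Icc (1 : ℤ) bm,
          (if i + 1 ≤ vL.v (σ πL - πL) then (1 : ℤ) else 0)) = vL.v (σ πL - πL) - 1 := by
      intro σ hσ
      rw [Finset.sum_boole]
      have hfil : (Finset.Icc (1 : ℤ) bm).filter (fun i => i + 1 ≤ vL.v (σ πL - πL)) =
          Finset.Icc (1 : ℤ) (vL.v (σ πL - πL) - 1) := by
        ext i
        simp only [Finset.mem_filter, Finset.mem_Icc]
        have := hDle σ hσ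
        omega
      have hb := hD1 σ hσ
      rw [hfil, Int.card_Icc_of_le (a := 1) (b := vL.v (σ πL - πL) - 1) (by omega)]
      push_cast
      ring
    have h2 : ∀ i : ℤ, ((Finset.univ.filter
        (fun σ : L ≃ₐ[K] L => σ ≠ 1 ∧ i + 1 ≤ vL.v (σ πL - πL))).card : ℤ) =
        ∑ σ ∈ Finset.univ.erase (1 : L ≃ₐ[K] L),
          (if i + 1 ≤ vL.v (σ πL - πL) then (1 : ℤ) else 0) := by
      intro i
      rw [← Finset.filter_filter, Finset.filter_ne', Finset.natCast_card_filter]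
    have h3 : (∑ σ ∈ Finset.univ.erase (1 : L ≃ₐ[K] L),
        (vL.v (σ πL - πL) - 1)) = d - Nz + 1 := by
      rw [Finset.sum_sub_distrib, ← hdsum, Finset.sum_const,
        Finset.card_erase_of_mem hone, Finset.card_univ, cardG, nsmul_eq_mul, mul_one]
      have hN1 : 1 ≤ p ^ n := Nat.one_le_iff_ne_zero.mpr (pow_ne_zero n hp.ne_zero)
      omega
    calc (∑ i ∈ Finset.Icc (1 : ℤ) bm, (Nat.card ↥(ramGrp K vL πL i) : ℤ))
        = ∑ i ∈ Finset.Icc (1 : ℤ) bm, (1 + ((Finset.univ.filter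
            (fun σ : L ≃ₐ[K] L => σ ≠ 1 ∧ i + 1 ≤ vL.v (σ πL - πL))).card : ℤ)) :=
          Finset.sum_congr rfl fun i _ => hcard i
      _ = ((Finset.Icc (1 : ℤ) bm).card : ℤ) + ∑ i ∈ Finset.Icc (1 : ℤ) bm,
            ∑ σ ∈ Finset.univ.erase (1 : L ≃ₐ[K] L),
              (if i + 1 ≤ vL.v (σ πL - πL) then (1 : ℤ) else 0) := by
          rw [Finset.sum_add_distrib, Finset.sum_const, nsmul_eq_mul, mul_one]
          exact congrArg _ (Finset.sum_congr rfl fun i _ => h2 i)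
      _ = bm + ∑ σ ∈ Finset.univ.erase (1 : L ≃ₐ[K] L),
            ∑ i ∈ Finset.Icc (1 : ℤ) bm,
              (if i + 1 ≤ vL.v (σ πL - πL) then (1 : ℤ) else 0) := by
          rw [Finset.sum_comm, Int.card_Icc_of_le (a := 1) (b := bm) (by omega)]
          ring
      _ = bm + ∑ σ ∈ Finset.univ.erase (1 : L ≃ₐ[K] L), (vL.v (σ πL - πL) - 1) := by
          rw [Finset.sum_congr rfl fun σ hσ => h1 σ (Finset.ne_of_mem_erase hσ)]
      _ = bm + d - Nz + 1 := by rw [h3]; ring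
  -- conclusion
  refine ⟨1, ?_⟩
  have hpne : ((p : ℚ) ^ n) ≠ 0 :=
    pow_ne_zero _ (Nat.cast_ne_zero.mpr hp.ne_zero)
  have hnum : (∑ i ∈ Finset.Icc (1 : ℤ) bm, ((Nat.card ↥(ramGrp K vL πL i) : ℕ) : ℚ)) =
      ((bm + d - Nz + 1 : ℤ) : ℚ) := by
    rw [← hsum]
    push_cast
    rfl
  unfold herbrandPhi
  rw [hcard0, hnum, mul_comm ((p:ℚ)^n) _, div_mul_cancel₀ _ hpne]
  push_cast [hNzdef]
  ring
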